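/- Let t > 3 be a prime, ζ a primitive t-th root of unity, λ = (1-ζ)(1-ζ̄), and for an integer a not divisible by t set λ_a = (1-ζ^a)(1-ζ^{-a}). Let x, y be elements of ℤ[ζ+ζ̄] and suppose that for a, b ∈ {1, …, t-1} with b ≢ ±a (mod t) there are units η_0, η_a, η_b of ℤ[ζ+ζ̄], elements ρ_a, ρ_b of ℤ[ζ], an element ρ_0 of ℤ[ζ+ζ̄], an integer m ≥ t, and a nonzero integer B with x + y = η_0·B·λ^{m-(t-1)/2}·ρ_0^t and (x + ζ^c·y)/(1 - ζ^c) = η_c·ρ_c^t for c ∈ {a, b} (where the conjugate relations (x + ζ^{-c}·y)/(1 - ζ^{-c}) = η_c·(ρ̄_c)^t also hold since x, y, η_c are real). Then there exists a unit η' of ℤ[ζ+ζ̄] such that (η_a/η_b)²·(ρ_a·ρ̄_a)^t + (-ρ_b·ρ̄_b)^t = η'·B²·λ^{2m-t}·(ρ_0²)^t. -/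

import Mathlib

open NumberField

set_option maxHeartbeats 2000000

theorem stmt_14_aux (t : ℕ+) (ht : (t : ℕ).Prime) (ht3 : 3 < (t : ℕ))
    {K : Type*} [Field K] [NumberField K] [CharZero K] [IsCyclotomicExtension {(t : ℕ)} ℚ K]
    (ζ ζbar : 𝓞 K) (hζ : IsPrimitiveRoot ζ (t : ℕ))
    (hζbar : ζ * ζbar = 1)
    (conj : 𝓞 K ≃+* 𝓞 K)
    (hconj : conj ζ = ζbar)
    (S : Subalgebra ℤ (𝓞 K)) (hSdef : S = Algebra.adjoin ℤ ({ζ + ζbar} : Set (𝓞 K)))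
    (lam : S)
    (hlam : (lam : 𝓞 K) = (1 - ζ) * (1 - ζbar))
    (x y : S)
    (a b : ℕ) (ha1 : 1 ≤ a) (hat : a ≤ (t : ℕ) - 1) (hb1 : 1 ≤ b) (hbt : b ≤ (t : ℕ) - 1)
    (hba : ¬ ((b : ℤ) ≡ (a : ℤ) [ZMOD (t : ℕ)]))
    (hba' : ¬ ((b : ℤ) ≡ -(a : ℤ) [ZMOD (t : ℕ)]))
    (η₀ ηa ηb : (S)ˣ)
    (ρ₀ : S)
    (ρa ρb : 𝓞 K)
    (m : ℕ) (hm : (t : ℕ) ≤ m) (B : ℤ) (hB : B ≠ 0)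
    (h0 : x + y =
      η₀ * (B : S) *
        lam ^ (m - ((t : ℕ) - 1) / 2) * ρ₀ ^ (t : ℕ))
    (hha : (x : 𝓞 K) + ζ ^ a * (y : 𝓞 K) =
      (1 - ζ ^ a) * (((ηa : S) : 𝓞 K) * ρa ^ (t : ℕ)))
    (hhb : (x : 𝓞 K) + ζ ^ b * (y : 𝓞 K) =
      (1 - ζ ^ b) * (((ηb : S) : 𝓞 K) * ρb ^ (t : ℕ)))
    (hhabar : (x : 𝓞 K) + ζbar ^ a * (y : 𝓞 K) =
      (1 - ζbar ^ a) * (((ηa : S) : 𝓞 K) *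
          (conj ρa) ^ (t : ℕ)))
    (hhbbar : (x : 𝓞 K) + ζbar ^ b * (y : 𝓞 K) =
      (1 - ζbar ^ b) * (((ηb : S) : 𝓞 K) *
          (conj ρb) ^ (t : ℕ))) :
    ∃ η' : (S)ˣ,
      (((ηa * ηb⁻¹ : Sˣ) : S) : 𝓞 K) ^ 2 *
          (ρa * conj ρa) ^ (t : ℕ) + (-(ρb * conj ρb)) ^ (t : ℕ) =
        ((η' : S) : 𝓞 K) *
          (B : 𝓞 K) ^ 2 *
          (lam : 𝓞 K) ^ (2 * m - (t : ℕ)) *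
          ((ρ₀ : 𝓞 K) ^ 2) ^ (t : ℕ) := by
  classical
  -- basic facts
  have ht2 : 1 < (t : ℕ) := ht.one_lt
  have htpos : 0 < (t : ℕ) := t.pos
  have hζt : ζ ^ (t : ℕ) = 1 := hζ.pow_eq_one
  have hζne : ζ ≠ 0 := left_ne_zero_of_mul_eq_one hζbar
  have hζbarne : ζbar ≠ 0 := right_ne_zero_of_mul_eq_one hζbar
  have hone : ∀ k : ℕ, ζ ^ k * ζbar ^ k = 1 := fun k => by
    rw [← mul_pow, hζbar, one_pow]
  have hζbart : ζbar ^ (t : ℕ) = 1 := by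
    have := hone t; rwa [hζt, one_mul] at this
  have hpowζ : ∀ k : ℕ, ζ ^ k = ζ ^ (k % (t : ℕ)) := fun k => by
    conv_lhs => rw [← Nat.div_add_mod k (t : ℕ)]
    rw [pow_add, pow_mul, hζt, one_pow, one_mul]
  have hpowζbar : ∀ k : ℕ, ζbar ^ k = ζbar ^ (k % (t : ℕ)) := fun k => by
    conv_lhs => rw [← Nat.div_add_mod k (t : ℕ)]
    rw [pow_add, pow_mul, hζbart, one_pow, one_mul]
  have hζbarconj : conj ζbar = ζ := by
    have h1 := congrArg conj hζbar
    rw [map_mul, map_one, hconj] at h1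
    have h2 : ζbar * ζ = 1 := by rw [mul_comm]; exact hζbar
    exact mul_left_cancel₀ hζbarne (h1.trans h2.symm)
  have hζ1 : ζ ≠ 1 := hζ.ne_one ht2
  have hζbar1 : ζbar ≠ 1 := by
    intro h; rw [h, mul_one] at hζbar; exact hζ1 hζbar
  have hL0 : (1 - ζ) * (1 - ζbar) ≠ 0 :=
    mul_ne_zero (sub_ne_zero.2 fun h => hζ1 h.symm) (sub_ne_zero.2 fun h => hζbar1 h.symm)
  have hζζbar : ζ ≠ ζbar := by
    intro h
    have h2 : ζ ^ 2 = 1 := by rw [pow_two]; nth_rewrite 2 [h]; exact hζbar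
    have := Nat.le_of_dvd (by norm_num) (hζ.dvd_of_pow_eq_one 2 h2)
    omega
  -- conj fixes S pointwise
  have hsmem : ζ + ζbar ∈ S := by rw [hSdef]; exact Algebra.subset_adjoin rfl
  have hconjS : ∀ z : 𝓞 K, z ∈ S → conj z = z := by
    intro z hz
    rw [hSdef] at hz
    induction hz using Algebra.adjoin_induction with
    | mem w hw =>
      rw [Set.mem_singleton_iff.1 hw, map_add, hconj, hζbarconj, add_comm]
    | algebraMap n => exact map_intCast _ n
    | add u v hu hv ihu ihv => rw [map_add, ihu, ihv]
    | mul u v hu hv ihu ihv => rw [map_mul, ihu, ihv]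
  -- adjoin ℤ {ζ} = ⊤
  haveI : Fact ((t : ℕ).Prime) := ⟨ht⟩
  have hζK : IsPrimitiveRoot ((ζ : 𝓞 K) : K) t :=
    hζ.map_of_injective (IsFractionRing.injective (𝓞 K) K)
  have htop : Algebra.adjoin ℤ ({ζ} : Set (𝓞 K)) = ⊤ := by
    have h := hζK.integralPowerBasis.adjoin_gen_eq_top
    rw [hζK.integralPowerBasis_gen] at h
    rwa [show hζK.toInteger = ζ from Subtype.ext rfl] at h
  -- real elements lie in S
  have hreal : ∀ z : 𝓞 K, conj z = z → z ∈ S := by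
    have hrepr : ∀ z : 𝓞 K, ∃ A B2 : 𝓞 K, A ∈ S ∧ B2 ∈ S ∧ z = A + B2 * ζ := by
      intro z
      have hz : z ∈ Algebra.adjoin ℤ ({ζ} : Set (𝓞 K)) := htop ▸ Algebra.mem_top
      induction hz using Algebra.adjoin_induction with
      | mem w hw =>
        rw [Set.mem_singleton_iff.1 hw]
        exact ⟨0, 1, S.zero_mem, S.one_mem, by ring⟩
      | algebraMap n =>
        exact ⟨algebraMap ℤ (𝓞 K) n, 0, S.algebraMap_mem n, S.zero_mem, by ring⟩
      | add u v hu hv ihu ihv =>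
        obtain ⟨A, B2, hA, hB2, rfl⟩ := ihu
        obtain ⟨C, D2, hC, hD, rfl⟩ := ihv
        exact ⟨A + C, B2 + D2, S.add_mem hA hC, S.add_mem hB2 hD, by ring⟩
      | mul u v hu hv ihu ihv =>
        obtain ⟨A, B2, hA, hB2, rfl⟩ := ihu
        obtain ⟨C, D2, hC, hD, rfl⟩ := ihv
        refine ⟨A * C - B2 * D2, A * D2 + B2 * C + B2 * D2 * (ζ + ζbar),
          S.sub_mem (S.mul_mem hA hC) (S.mul_mem hB2 hD),
          S.add_mem (S.add_mem (S.mul_mem hA hD) (S.mul_mem hB2 hC))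
            (S.mul_mem (S.mul_mem hB2 hD) hsmem), ?_⟩
        linear_combination (-(B2 * D2)) * hζbar
    intro z hz
    obtain ⟨A, B2, hA, hB2, rfl⟩ := hrepr z
    have h1 : conj A = A := hconjS A hA
    have h2 : conj B2 = B2 := hconjS _ hB2
    have h3 : A + B2 * ζbar = A + B2 * ζ := by
      conv_lhs => rw [← h1, ← h2, ← hconj, ← map_mul, ← map_add]
      rw [hz]
    have h4 : B2 * (ζ - ζbar) = 0 := by linear_combination -h3
    rcases mul_eq_zero.1 h4 with h | h
    · rw [h]; simpa using hA
    · exact absurd (sub_eq_zero.1 h).symm (Ne.symm hζζbar)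
  -- unit maker
  have mkU : ∀ u v : 𝓞 K, u * v = 1 → conj u = u →
      ∃ w : Sˣ, ((w : S) : 𝓞 K) = u ∧ (((w⁻¹ : Sˣ) : S) : 𝓞 K) = v := by
    intro u v huv hcu
    have hcv : conj v = v := by
      have h1 : conj u * conj v = 1 := by rw [← map_mul, huv, map_one]
      rw [hcu] at h1
      exact mul_left_cancel₀ (left_ne_zero_of_mul_eq_one huv) (h1.trans huv.symm)
    refine ⟨⟨⟨u, hreal u hcu⟩, ⟨v, hreal v hcv⟩, Subtype.ext huv,
      Subtype.ext (by rw [mul_comm] at huv; exact huv)⟩, rfl, rfl⟩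
  have unit_mulinv : ∀ g : Sˣ, ((g : S) : 𝓞 K) * (((g⁻¹ : Sˣ) : S) : 𝓞 K) = 1 := by
    intro g
    have h : ((g : S) * ((g⁻¹ : Sˣ) : S)) = (1 : S) := by exact_mod_cast g.mul_inv
    exact congrArg Subtype.val h
  -- modular inverses and geometric sums
  have hinv : ∀ k : ℕ, ¬ (t : ℕ) ∣ k → ∃ k' : ℕ, (k * k') % (t : ℕ) = 1 := by
    intro k hk
    have hco : Nat.Coprime (t : ℕ) k := (Nat.Prime.coprime_iff_not_dvd ht).2 hk
    obtain ⟨k', -, hk'⟩ := Nat.exists_mul_mod_eq_one_of_coprime hco.symm ht2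
    exact ⟨k', hk'⟩
  have hgeo : ∀ (z : 𝓞 K) (k : ℕ),
      (1 - z) * (∑ i ∈ Finset.range k, z ^ i) = 1 - z ^ k := by
    intro z k
    have h := geom_sum_mul z k
    linear_combination -h
  have hzeta : ∀ k : ℕ, ¬ (t : ℕ) ∣ k →
      ∃ p q : 𝓞 K, (1 - ζ) * p = 1 - ζ ^ k ∧ (1 - ζ ^ k) * q = 1 - ζ := by
    intro k hk
    obtain ⟨k', hk'⟩ := hinv k hk
    refine ⟨∑ i ∈ Finset.range k, ζ ^ i, ∑ i ∈ Finset.range k', (ζ ^ k) ^ i, hgeo ζ k, ?_⟩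
    rw [hgeo (ζ ^ k) k', ← pow_mul, hpowζ (k * k'), hk', pow_one]
  have hzbar : ∀ k : ℕ, ¬ (t : ℕ) ∣ k →
      ∃ p q : 𝓞 K, (1 - ζbar) * p = 1 - ζbar ^ k ∧ (1 - ζbar ^ k) * q = 1 - ζbar := by
    intro k hk
    obtain ⟨k', hk'⟩ := hinv k hk
    refine ⟨∑ i ∈ Finset.range k, ζbar ^ i, ∑ i ∈ Finset.range k', (ζbar ^ k) ^ i,
      hgeo ζbar k, ?_⟩
    rw [hgeo (ζbar ^ k) k', ← pow_mul, hpowζbar (k * k'), hk', pow_one]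
  -- the cyclotomic-unit for λ_k / λ
  have mkW : ∀ k : ℕ, ¬ (t : ℕ) ∣ k → ∃ w : Sˣ,
      ((w : S) : 𝓞 K) * ((1 - ζ) * (1 - ζbar)) = (1 - ζ ^ k) * (1 - ζbar ^ k) := by
    intro k hk
    obtain ⟨p, q, hp, hq⟩ := hzeta k hk
    obtain ⟨p', q', hp', hq'⟩ := hzbar k hk
    have h1 : (p * p') * ((1 - ζ) * (1 - ζbar)) = (1 - ζ ^ k) * (1 - ζbar ^ k) := by
      linear_combination ((1 - ζbar) * p') * hp + (1 - ζ ^ k) * hp'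
    have h2 : (q * q') * ((1 - ζ ^ k) * (1 - ζbar ^ k)) = (1 - ζ) * (1 - ζbar) := by
      linear_combination ((1 - ζbar ^ k) * q') * hq + (1 - ζ) * hq'
    have huv : (p * p') * (q * q') = 1 := by
      have h3 : ((p * p') * (q * q')) * ((1 - ζ) * (1 - ζbar)) =
          1 * ((1 - ζ) * (1 - ζbar)) := by
        linear_combination (q * q') * h1 + h2
      exact mul_right_cancel₀ hL0 h3
    have hcu : conj (p * p') = p * p' := by
      have h5 := congrArg conj h1
      simp only [map_mul, map_sub, map_one, map_pow, hconj, hζbarconj] at h5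
      have h4 : ((1 - ζ) * (1 - ζbar)) * (conj p * conj p') =
          ((1 - ζ) * (1 - ζbar)) * (p * p') := by
        linear_combination h5 - h1
      rw [map_mul]
      exact mul_left_cancel₀ hL0 h4
    obtain ⟨w, hw, -⟩ := mkU (p * p') (q * q') huv hcu
    exact ⟨w, by rw [hw]; exact h1⟩
  -- the special exponents d, e
  have hta : a < (t : ℕ) := by omega
  have htb : b < (t : ℕ) := by omega
  obtain ⟨d, hddef⟩ : ∃ d, d = (b + (t : ℕ) - a) % (t : ℕ) := ⟨_, rfl⟩
  obtain ⟨e, hedef⟩ : ∃ e, e = (a + b) % (t : ℕ) := ⟨_, rfl⟩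
  have htd : ¬ (t : ℕ) ∣ d := by
    intro hdd
    rw [hddef, Nat.dvd_mod_iff dvd_rfl] at hdd
    obtain ⟨c, hc⟩ := hdd
    apply hba
    zify [show a ≤ b + (t : ℕ) by omega] at hc
    exact Int.modEq_iff_dvd.2 ⟨1 - c, by linarith⟩
  have hte : ¬ (t : ℕ) ∣ e := by
    intro hdd
    rw [hedef, Nat.dvd_mod_iff dvd_rfl] at hdd
    obtain ⟨c, hc⟩ := hdd
    apply hba'
    have hc' : (a : ℤ) + b = (t : ℕ) * c := by exact_mod_cast hc
    exact Int.modEq_iff_dvd.2 ⟨-c, by linarith⟩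
  have hd : ζ ^ (a + d) = ζ ^ b := by
    rw [hpowζ (a + d), hpowζ b]
    congr 1
    have h1 : (a + d) % (t : ℕ) = (a + (b + (t : ℕ) - a)) % (t : ℕ) := by
      rw [hddef]; exact Nat.ModEq.add_left a (Nat.mod_modEq _ _)
    rw [h1, show a + (b + (t : ℕ) - a) = b + (t : ℕ) by omega, Nat.add_mod_right]
  have heab : ζbar ^ e = ζbar ^ (a + b) := by
    rw [hedef, ← hpowζbar (a + b)]
  -- the unit w0 with λ * w0 = s_a - s_b
  obtain ⟨pd, qd, hpd, hqd⟩ := hzeta d htd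
  obtain ⟨pe, qe, hpe, hqe⟩ := hzbar e hte
  have hu0 : ((1 - ζ) * (1 - ζbar)) * (ζ ^ a * (pd * pe)) =
      (ζ ^ a + ζbar ^ a) - (ζ ^ b + ζbar ^ b) := by
    have h1 : ((1 - ζ) * (1 - ζbar)) * (ζ ^ a * (pd * pe)) =
        ζ ^ a * ((1 - ζ ^ d) * (1 - ζbar ^ e)) := by
      linear_combination (ζ ^ a * (1 - ζbar) * pe) * hpd + (ζ ^ a * (1 - ζ ^ d)) * hpe
    rw [h1, heab]
    have hzd : ζ ^ a * ζ ^ d = ζ ^ b := by rw [← pow_add, hd]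
    linear_combination (ζbar ^ a * ζbar ^ b - 1) * hzd - ζbar ^ b * hone a
      + ζbar ^ a * hone b
  have huv0 : (ζ ^ a * (pd * pe)) * (ζbar ^ a * (qd * qe)) = 1 := by
    have h3 : ((ζ ^ a * (pd * pe)) * (ζbar ^ a * (qd * qe))) * ((1 - ζ) * (1 - ζbar)) =
        1 * ((1 - ζ) * (1 - ζbar)) := by
      linear_combination ((1 - ζ) * (1 - ζbar) * pd * pe * qd * qe) * hone a
        + ((1 - ζbar) * pe * qd * qe) * hpd + ((1 - ζ ^ d) * qd * qe) * hpe
        + ((1 - ζbar ^ e) * qe) * hqd + (1 - ζ) * hqe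
    exact mul_right_cancel₀ hL0 h3
  have hcu0 : conj (ζ ^ a * (pd * pe)) = ζ ^ a * (pd * pe) := by
    have h5 := congrArg conj hu0
    simp only [map_mul, map_sub, map_add, map_one, map_pow, hconj, hζbarconj] at h5
    have h4 : ((1 - ζ) * (1 - ζbar)) * (ζbar ^ a * (conj pd * conj pe)) =
        ((1 - ζ) * (1 - ζbar)) * (ζ ^ a * (pd * pe)) := by
      linear_combination h5 - hu0
    have h6 := mul_left_cancel₀ hL0 h4
    rw [map_mul, map_mul, map_pow, hconj]
    exact h6
  obtain ⟨w0, hw0, -⟩ := mkU _ _ huv0 hcu0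
  have hsab : ((1 - ζ) * (1 - ζbar)) * ((w0 : S) : 𝓞 K) =
      (ζ ^ a + ζbar ^ a) - (ζ ^ b + ζbar ^ b) := by
    rw [hw0]; exact hu0
  obtain ⟨wa, hwa⟩ := mkW a (fun h => by have := Nat.le_of_dvd (by omega) h; omega)
  obtain ⟨wb, hwb⟩ := mkW b (fun h => by have := Nat.le_of_dvd (by omega) h; omega)
  -- coerce h0 to 𝓞 K and square it
  have h0R : (x : 𝓞 K) + (y : 𝓞 K) = ((η₀ : S) : 𝓞 K) * (B : 𝓞 K) *
      ((lam : S) : 𝓞 K) ^ (m - ((t : ℕ) - 1) / 2) * ((ρ₀ : S) : 𝓞 K) ^ (t : ℕ) := by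
    have h := congrArg (fun z : S => (z : 𝓞 K)) h0
    push_cast at h
    exact h
  rw [hlam] at h0R
  have hodd : Odd (t : ℕ) := ht.odd_of_ne_two (by omega)
  have htmod : (t : ℕ) % 2 = 1 := Nat.odd_iff.1 hodd
  have hsq : ((x : 𝓞 K) + (y : 𝓞 K)) ^ 2 = ((η₀ : S) : 𝓞 K) ^ 2 * (B : 𝓞 K) ^ 2 *
      ((1 - ζ) * (1 - ζbar)) ^ (2 * m - (t : ℕ) + 1) * (((ρ₀ : S) : 𝓞 K) ^ 2) ^ (t : ℕ) := by
    rw [h0R, show (2 * m - (t : ℕ) + 1) = (m - ((t : ℕ) - 1) / 2) * 2 by omega, pow_mul]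
    ring
  -- the two norm equations
  have hA : (x : 𝓞 K) ^ 2 + (ζ ^ a + ζbar ^ a) * ((x : 𝓞 K) * (y : 𝓞 K)) + (y : 𝓞 K) ^ 2 =
      ((1 - ζ ^ a) * (1 - ζbar ^ a)) * (((ηa : S) : 𝓞 K) ^ 2 * (ρa * conj ρa) ^ (t : ℕ)) := by
    have h : ((x : 𝓞 K) + ζ ^ a * (y : 𝓞 K)) * ((x : 𝓞 K) + ζbar ^ a * (y : 𝓞 K)) =
        ((1 - ζ ^ a) * (((ηa : S) : 𝓞 K) * ρa ^ (t : ℕ))) *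
        ((1 - ζbar ^ a) * (((ηa : S) : 𝓞 K) * (conj ρa) ^ (t : ℕ))) := by
      rw [hha, hhabar]
    linear_combination h - (y : 𝓞 K) ^ 2 * hone a
  have hBB : (x : 𝓞 K) ^ 2 + (ζ ^ b + ζbar ^ b) * ((x : 𝓞 K) * (y : 𝓞 K)) + (y : 𝓞 K) ^ 2 =
      ((1 - ζ ^ b) * (1 - ζbar ^ b)) * (((ηb : S) : 𝓞 K) ^ 2 * (ρb * conj ρb) ^ (t : ℕ)) := by
    have h : ((x : 𝓞 K) + ζ ^ b * (y : 𝓞 K)) * ((x : 𝓞 K) + ζbar ^ b * (y : 𝓞 K)) =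
        ((1 - ζ ^ b) * (((ηb : S) : 𝓞 K) * ρb ^ (t : ℕ))) *
        ((1 - ζbar ^ b) * (((ηb : S) : 𝓞 K) * (conj ρb) ^ (t : ℕ))) := by
      rw [hhb, hhbbar]
    linear_combination h - (y : 𝓞 K) ^ 2 * hone b
  -- the key identity
  have hla : (1 - ζ ^ a) * (1 - ζbar ^ a) = 2 - (ζ ^ a + ζbar ^ a) := by
    linear_combination hone a
  have hlb : (1 - ζ ^ b) * (1 - ζbar ^ b) = 2 - (ζ ^ b + ζbar ^ b) := by
    linear_combination hone b
  have hstar : ((1 - ζ ^ a) * (1 - ζbar ^ a)) * ((1 - ζ ^ b) * (1 - ζbar ^ b)) *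
      (((ηa : S) : 𝓞 K) ^ 2 * (ρa * conj ρa) ^ (t : ℕ) -
        ((ηb : S) : 𝓞 K) ^ 2 * (ρb * conj ρb) ^ (t : ℕ)) =
      ((ζ ^ a + ζbar ^ a) - (ζ ^ b + ζbar ^ b)) * ((x : 𝓞 K) + (y : 𝓞 K)) ^ 2 := by
    linear_combination (-((1 - ζ ^ b) * (1 - ζbar ^ b))) * hA
      + ((1 - ζ ^ a) * (1 - ζbar ^ a)) * hBB
      + ((x : 𝓞 K) ^ 2 + (ζ ^ a + ζbar ^ a) * ((x : 𝓞 K) * (y : 𝓞 K)) + (y : 𝓞 K) ^ 2) * hlb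
      - ((x : 𝓞 K) ^ 2 + (ζ ^ b + ζbar ^ b) * ((x : 𝓞 K) * (y : 𝓞 K)) + (y : 𝓞 K) ^ 2) * hla
  have hkey : ((1 - ζ) * (1 - ζbar)) ^ 2 * (((wa : S) : 𝓞 K) * ((wb : S) : 𝓞 K) *
      (((ηa : S) : 𝓞 K) ^ 2 * (ρa * conj ρa) ^ (t : ℕ) -
        ((ηb : S) : 𝓞 K) ^ 2 * (ρb * conj ρb) ^ (t : ℕ))) =
      ((1 - ζ) * (1 - ζbar)) ^ 2 * (((w0 : S) : 𝓞 K) * ((η₀ : S) : 𝓞 K) ^ 2 * (B : 𝓞 K) ^ 2 *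
        ((1 - ζ) * (1 - ζbar)) ^ (2 * m - (t : ℕ)) * (((ρ₀ : S) : 𝓞 K) ^ 2) ^ (t : ℕ)) := by
    linear_combination (((wb : S) : 𝓞 K) * ((1 - ζ) * (1 - ζbar)) *
        (((ηa : S) : 𝓞 K) ^ 2 * (ρa * conj ρa) ^ (t : ℕ) -
          ((ηb : S) : 𝓞 K) ^ 2 * (ρb * conj ρb) ^ (t : ℕ))) * hwa
      + (((1 - ζ ^ a) * (1 - ζbar ^ a)) *
        (((ηa : S) : 𝓞 K) ^ 2 * (ρa * conj ρa) ^ (t : ℕ) -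
          ((ηb : S) : 𝓞 K) ^ 2 * (ρb * conj ρb) ^ (t : ℕ))) * hwb
      + hstar
      - (((x : 𝓞 K) + (y : 𝓞 K)) ^ 2) * hsab
      + (((1 - ζ) * (1 - ζbar)) * ((w0 : S) : 𝓞 K)) * hsq
  have hkey2 := mul_left_cancel₀ (pow_ne_zero 2 hL0) hkey
  -- conclusion
  refine ⟨wa⁻¹ * wb⁻¹ * w0 * η₀ ^ 2 * (ηb⁻¹) ^ 2, ?_⟩
  rw [hlam, Odd.neg_pow hodd]
  have hEab : (((ηa * ηb⁻¹ : Sˣ) : S) : 𝓞 K) =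
      ((ηa : S) : 𝓞 K) * (((ηb⁻¹ : Sˣ) : S) : 𝓞 K) := by push_cast; ring
  have hE' : (((wa⁻¹ * wb⁻¹ * w0 * η₀ ^ 2 * (ηb⁻¹) ^ 2 : Sˣ) : S) : 𝓞 K) =
      (((wa⁻¹ : Sˣ) : S) : 𝓞 K) * (((wb⁻¹ : Sˣ) : S) : 𝓞 K) * ((w0 : S) : 𝓞 K) *
      ((η₀ : S) : 𝓞 K) ^ 2 * (((ηb⁻¹ : Sˣ) : S) : 𝓞 K) ^ 2 := by push_cast; ring
  rw [hEab, hE']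
  have h1 := unit_mulinv wa
  have h2 := unit_mulinv wb
  have h3 := unit_mulinv ηb
  linear_combination ((((wa⁻¹ : Sˣ) : S) : 𝓞 K) * (((wb⁻¹ : Sˣ) : S) : 𝓞 K) *
      (((ηb⁻¹ : Sˣ) : S) : 𝓞 K) ^ 2) * hkey2
    + (((ρb * conj ρb) ^ (t : ℕ)) * ((wb : S) : 𝓞 K) * (((wb⁻¹ : Sˣ) : S) : 𝓞 K) *
        ((ηb : S) : 𝓞 K) ^ 2 * (((ηb⁻¹ : Sˣ) : S) : 𝓞 K) ^ 2
      - ((ηa : S) : 𝓞 K) ^ 2 * (((ηb⁻¹ : Sˣ) : S) : 𝓞 K) ^ 2 *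
        ((ρa * conj ρa) ^ (t : ℕ)) * ((wb : S) : 𝓞 K) * (((wb⁻¹ : Sˣ) : S) : 𝓞 K)) * h1
    + (((ρb * conj ρb) ^ (t : ℕ)) * ((ηb : S) : 𝓞 K) ^ 2 * (((ηb⁻¹ : Sˣ) : S) : 𝓞 K) ^ 2
      - ((ηa : S) : 𝓞 K) ^ 2 * (((ηb⁻¹ : Sˣ) : S) : 𝓞 K) ^ 2 *
        ((ρa * conj ρa) ^ (t : ℕ))) * h2
    + (((ρb * conj ρb) ^ (t : ℕ)) *
        (((ηb : S) : 𝓞 K) * (((ηb⁻¹ : Sˣ) : S) : 𝓞 K) + 1)) * h3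

/-- Let `t > 3` be a prime, `ζ ∈ ℤ[ζ]` (the ring of integers of
`ℚ(ζ_t)`) a primitive `t`-th root of unity, `ζbar = ζ⁻¹`, `λ = (1-ζ)(1-ζbar)`, and let
`conj` denote complex conjugation on `ℤ[ζ]` (the ring automorphism with `conj ζ = ζbar`).
Let `x, y ∈ ℤ[ζ+ζbar]`, and suppose for `a, b ∈ {1, …, t-1}` with `b ≢ ±a (mod t)` there
are units `η₀, η_a, η_b` of `ℤ[ζ+ζbar]`, elements `ρ_a, ρ_b ∈ ℤ[ζ]`, `ρ₀ ∈ ℤ[ζ+ζbar]`,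
`m ≥ t` and a nonzero integer `B` with `x + y = η₀·B·λ^{m-(t-1)/2}·ρ₀^t`,
`(x + ζ^c·y)/(1-ζ^c) = η_c·ρ_c^t` for `c ∈ {a,b}`, together with the conjugate
relations.  Then there is a unit `η'` of `ℤ[ζ+ζbar]` with
`(η_a/η_b)²·(ρ_a·ρ̄_a)^t + (-ρ_b·ρ̄_b)^t = η'·B²·λ^{2m-t}·(ρ₀²)^t`. -/
theorem stmt_14 (t : ℕ+) (ht : (t : ℕ).Prime) (ht3 : 3 < (t : ℕ))
    (ζ ζbar : 𝓞 (CyclotomicField t ℚ)) (hζ : IsPrimitiveRoot ζ (t : ℕ))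
    (hζbar : ζ * ζbar = 1)
    (conj : 𝓞 (CyclotomicField t ℚ) ≃+* 𝓞 (CyclotomicField t ℚ))
    (hconj : conj ζ = ζbar)
    (lam : Algebra.adjoin ℤ ({ζ + ζbar} : Set (𝓞 (CyclotomicField t ℚ))))
    (hlam : (lam : 𝓞 (CyclotomicField t ℚ)) = (1 - ζ) * (1 - ζbar))
    (x y : Algebra.adjoin ℤ ({ζ + ζbar} : Set (𝓞 (CyclotomicField t ℚ))))
    (a b : ℕ) (ha1 : 1 ≤ a) (hat : a ≤ (t : ℕ) - 1) (hb1 : 1 ≤ b) (hbt : b ≤ (t : ℕ) - 1)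
    (hba : ¬ ((b : ℤ) ≡ (a : ℤ) [ZMOD (t : ℕ)]))
    (hba' : ¬ ((b : ℤ) ≡ -(a : ℤ) [ZMOD (t : ℕ)]))
    (η₀ ηa ηb : (Algebra.adjoin ℤ ({ζ + ζbar} : Set (𝓞 (CyclotomicField t ℚ))))ˣ)
    (ρ₀ : Algebra.adjoin ℤ ({ζ + ζbar} : Set (𝓞 (CyclotomicField t ℚ))))
    (ρa ρb : 𝓞 (CyclotomicField t ℚ))
    (m : ℕ) (hm : (t : ℕ) ≤ m) (B : ℤ) (hB : B ≠ 0)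
    (h0 : x + y =
      η₀ * (B : Algebra.adjoin ℤ ({ζ + ζbar} : Set (𝓞 (CyclotomicField t ℚ)))) *
        lam ^ (m - ((t : ℕ) - 1) / 2) * ρ₀ ^ (t : ℕ))
    (hha : (x : 𝓞 (CyclotomicField t ℚ)) + ζ ^ a * (y : 𝓞 (CyclotomicField t ℚ)) =
      (1 - ζ ^ a) * (((ηa : Algebra.adjoin ℤ ({ζ + ζbar} :
        Set (𝓞 (CyclotomicField t ℚ)))) : 𝓞 (CyclotomicField t ℚ)) * ρa ^ (t : ℕ)))
    (hhb : (x : 𝓞 (CyclotomicField t ℚ)) + ζ ^ b * (y : 𝓞 (CyclotomicField t ℚ)) =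
      (1 - ζ ^ b) * (((ηb : Algebra.adjoin ℤ ({ζ + ζbar} :
        Set (𝓞 (CyclotomicField t ℚ)))) : 𝓞 (CyclotomicField t ℚ)) * ρb ^ (t : ℕ)))
    (hhabar : (x : 𝓞 (CyclotomicField t ℚ)) + ζbar ^ a * (y : 𝓞 (CyclotomicField t ℚ)) =
      (1 - ζbar ^ a) * (((ηa : Algebra.adjoin ℤ ({ζ + ζbar} :
        Set (𝓞 (CyclotomicField t ℚ)))) : 𝓞 (CyclotomicField t ℚ)) *
          (conj ρa) ^ (t : ℕ)))
    (hhbbar : (x : 𝓞 (CyclotomicField t ℚ)) + ζbar ^ b * (y : 𝓞 (CyclotomicField t ℚ)) =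
      (1 - ζbar ^ b) * (((ηb : Algebra.adjoin ℤ ({ζ + ζbar} :
        Set (𝓞 (CyclotomicField t ℚ)))) : 𝓞 (CyclotomicField t ℚ)) *
          (conj ρb) ^ (t : ℕ))) :
    ∃ η' : (Algebra.adjoin ℤ ({ζ + ζbar} : Set (𝓞 (CyclotomicField t ℚ))))ˣ,
      (((ηa * ηb⁻¹ : (Algebra.adjoin ℤ ({ζ + ζbar} :
          Set (𝓞 (CyclotomicField t ℚ))))ˣ) : Algebra.adjoin ℤ ({ζ + ζbar} :
          Set (𝓞 (CyclotomicField t ℚ)))) : 𝓞 (CyclotomicField t ℚ)) ^ 2 *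
          (ρa * conj ρa) ^ (t : ℕ) + (-(ρb * conj ρb)) ^ (t : ℕ) =
        ((η' : Algebra.adjoin ℤ ({ζ + ζbar} :
          Set (𝓞 (CyclotomicField t ℚ)))) : 𝓞 (CyclotomicField t ℚ)) *
          (B : 𝓞 (CyclotomicField t ℚ)) ^ 2 *
          (lam : 𝓞 (CyclotomicField t ℚ)) ^ (2 * m - (t : ℕ)) *
          ((ρ₀ : 𝓞 (CyclotomicField t ℚ)) ^ 2) ^ (t : ℕ) := by
  haveI : NeZero (t : ℕ) := ⟨t.ne_zero⟩
  haveI : NeZero ((t : ℕ) : ℚ) := ⟨by exact_mod_cast t.ne_zero⟩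
  haveI : IsCyclotomicExtension {(t : ℕ)} ℚ (CyclotomicField t ℚ) :=
    CyclotomicField.isCyclotomicExtension (t : ℕ) ℚ
  haveI : NumberField (CyclotomicField t ℚ) := IsCyclotomicExtension.numberField {(t : ℕ)} ℚ _
  exact stmt_14_aux t ht ht3 ζ ζbar hζ hζbar conj hconj _ rfl lam hlam x y a b ha1 hat
    hb1 hbt hba hba' η₀ ηa ηb ρ₀ ρa ρb m hm B hB h0 hha hhb hhabar hhbbar
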